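/- For the TRW coframe and connection, the vector part of the torsion, V_a := T^b_{ba} (trace of the frame-index torsion tensor), satisfies V_1 = −3(ȧ/a + W₁) and V_2 = V_3 = V_4 = 0 at every point of U; i.e. the vector torsion one-form is V = −3(ȧ(t)/a(t) + W₁(t)) h¹. -/

import Mathlib

/-!
STATEMENT 8: For the TRW coframe and connection, the vector part of the torsion,
V_a = T^b_{ba} (trace of the frame-index torsion tensor), satisfies
V_1 = −3(ȧ/a + W₁) and V_2 = V_3 = V_4 = 0 at every point of U, i.e. the vector
torsion one-form is V = −3(ȧ(t)/a(t) + W₁(t)) h¹.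
(Frame indices 1..4 are Fin 4 indices 0..3.)
Coordinates: x : Fin 4 → ℝ with t = x 0, r = x 1, θ = x 2, φ = x 3.
-/

open Real
open scoped ContDiff

noncomputable section

/-- Partial derivative in the μ-th coordinate direction. -/
def pd (μ : Fin 4) (f : (Fin 4 → ℝ) → ℝ) (x : Fin 4 → ℝ) : ℝ :=
  fderiv ℝ f x (Pi.single μ 1)

/-- The Minkowski metric η = diag(−1,1,1,1) on frame indices. -/
def eta : Matrix (Fin 4) (Fin 4) ℝ := Matrix.diagonal ![-1, 1, 1, 1]

/-- The TRW coframe h^a_μ = diag(1, a/χ, a r, a r sinθ), χ = √(1 − k r²);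
rows are frame indices a, columns are coordinate indices μ. -/
def hco (k : ℝ) (a : ℝ → ℝ) (x : Fin 4 → ℝ) : Matrix (Fin 4) (Fin 4) ℝ :=
  Matrix.diagonal
    ![1, a (x 0) / Real.sqrt (1 - k * (x 1) ^ 2),
      a (x 0) * (x 1), a (x 0) * (x 1) * Real.sin (x 2)]

/-- The inverse frame h_a^μ = diag(1, χ/a, 1/(a r), 1/(a r sinθ));
rows are frame indices a, columns are coordinate indices μ. -/
def hin (k : ℝ) (a : ℝ → ℝ) (x : Fin 4 → ℝ) : Matrix (Fin 4) (Fin 4) ℝ :=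
  Matrix.diagonal
    ![1, Real.sqrt (1 - k * (x 1) ^ 2) / a (x 0),
      1 / (a (x 0) * (x 1)), 1 / (a (x 0) * (x 1) * Real.sin (x 2))]

/-- The matrices ω_μ = (ω^a_{bμ}) of the TRW connection, obtained from the
antisymmetric one-forms ω_{12} = W₁(a/χ) dr, ω_{13} = W₁ a r dθ,
ω_{14} = W₁ a r sinθ dφ, ω_{23} = −χ dθ + W₂ a r sinθ dφ,
ω_{24} = −W₂ a r dθ − χ sinθ dφ, ω_{34} = W₂(a/χ) dr − cosθ dφ,
via ω^a_{bμ} = η^{ac} ω_{cbμ}. -/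
def omegaTRW (k : ℝ) (a W₁ W₂ : ℝ → ℝ) (μ : Fin 4) (x : Fin 4 → ℝ) :
    Matrix (Fin 4) (Fin 4) ℝ :=
  let t := x 0
  let r := x 1
  let θ := x 2
  let χ := Real.sqrt (1 - k * r ^ 2)
  ![(0 : Matrix (Fin 4) (Fin 4) ℝ),
    !![0, -(W₁ t * a t / χ), 0, 0;
       -(W₁ t * a t / χ), 0, 0, 0;
       0, 0, 0, W₂ t * a t / χ;
       0, 0, -(W₂ t * a t / χ), 0],
    !![0, 0, -(W₁ t * a t * r), 0;
       0, 0, -χ, -(W₂ t * a t * r);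
       -(W₁ t * a t * r), χ, 0, 0;
       0, W₂ t * a t * r, 0, 0],
    !![0, 0, 0, -(W₁ t * a t * r * Real.sin θ);
       0, 0, W₂ t * a t * r * Real.sin θ, -(χ * Real.sin θ);
       0, -(W₂ t * a t * r * Real.sin θ), 0, -Real.cos θ;
       -(W₁ t * a t * r * Real.sin θ), χ * Real.sin θ, Real.cos θ, 0]] μ

/-- Torsion tensor T^a_{μν} = ∂_μ h^a_ν − ∂_ν h^a_μ + ω^a_{bμ} h^b_ν − ω^a_{bν} h^b_μ. -/
def Tor (k : ℝ) (a W₁ W₂ : ℝ → ℝ) (x : Fin 4 → ℝ) (A μ ν : Fin 4) : ℝ :=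
  pd μ (fun y => hco k a y A ν) x - pd ν (fun y => hco k a y A μ) x
    + ∑ b, (omegaTRW k a W₁ W₂ μ x A b * hco k a x b ν
        - omegaTRW k a W₁ W₂ ν x A b * hco k a x b μ)

/-- Frame components of the torsion tensor: T^a_{bc} = T^a_{μν} h_b^μ h_c^ν. -/
def Tfr (k : ℝ) (a W₁ W₂ : ℝ → ℝ) (x : Fin 4 → ℝ) (A B C : Fin 4) : ℝ :=
  ∑ μ, ∑ ν, Tor k a W₁ W₂ x A μ ν * hin k a x B μ * hin k a x C ν

/-- Vector part of the torsion: V_a = T^b_{ba}. -/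
def Vfr (k : ℝ) (a W₁ W₂ : ℝ → ℝ) (x : Fin 4 → ℝ) (A : Fin 4) : ℝ :=
  ∑ B, Tfr k a W₁ W₂ x B B A

set_option maxHeartbeats 4000000

/-- The vector torsion of the TRW geometry: V₁ = −3(ȧ/a + W₁), V₂ = V₃ = V₄ = 0,
i.e. V = −3(ȧ/a + W₁) h¹. -/
theorem TRW_vector_torsion (k : ℝ) (a W₁ W₂ : ℝ → ℝ)
    (ha : ContDiff ℝ ∞ a) (hapos : ∀ t, 0 < a t)
    (hW₁ : ContDiff ℝ ∞ W₁) (hW₂ : ContDiff ℝ ∞ W₂)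
    (x : Fin 4 → ℝ) (hr : 0 < x 1) (hθ₁ : 0 < x 2) (hθ₂ : x 2 < Real.pi)
    (hk : 0 < 1 - k * (x 1) ^ 2) :
    Vfr k a W₁ W₂ x 0 = -3 * (deriv a (x 0) / a (x 0) + W₁ (x 0)) ∧
    Vfr k a W₁ W₂ x 1 = 0 ∧
    Vfr k a W₁ W₂ x 2 = 0 ∧
    Vfr k a W₁ W₂ x 3 = 0 := by
  have hproj : ∀ i : Fin 4, HasFDerivAt (fun y : Fin 4 → ℝ => y i)
      (ContinuousLinearMap.proj i : (Fin 4 → ℝ) →L[ℝ] ℝ) x := fun i => hasFDerivAt_apply i x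
  have hat : HasFDerivAt (fun y : Fin 4 → ℝ => a (y 0))
      (deriv a (x 0) • (ContinuousLinearMap.proj 0 : (Fin 4 → ℝ) →L[ℝ] ℝ)) x :=
    ((ha.differentiable (by norm_num) (x 0)).hasDerivAt).comp_hasFDerivAt x (hproj 0)
  have hχpos : 0 < Real.sqrt (1 - k * x 1 ^ 2) := Real.sqrt_pos.2 hk
  have hχ : Real.sqrt (1 - k * x 1 ^ 2) ≠ 0 := hχpos.ne'
  have hs1 : HasDerivAt (fun r : ℝ => 1 - k * r ^ 2) (-(k * (2 * x 1))) (x 1) := by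
    simpa using ((hasDerivAt_pow 2 (x 1)).const_mul k).const_sub 1
  have hs2 : HasDerivAt (fun r : ℝ => Real.sqrt (1 - k * r ^ 2))
      (-(k * (2 * x 1)) / (2 * Real.sqrt (1 - k * x 1 ^ 2))) (x 1) :=
    hs1.sqrt hk.ne'
  have hsF : HasFDerivAt (fun y : Fin 4 → ℝ => (Real.sqrt (1 - k * y 1 ^ 2))⁻¹)
      ((-(-(k * (2 * x 1)) / (2 * Real.sqrt (1 - k * x 1 ^ 2))) / Real.sqrt (1 - k * x 1 ^ 2) ^ 2)
        • (ContinuousLinearMap.proj 1 : (Fin 4 → ℝ) →L[ℝ] ℝ)) x :=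
    by have h := (hs2.inv hχ).comp_hasFDerivAt x (hproj 1); exact h
  have hsin : HasFDerivAt (fun y : Fin 4 → ℝ => Real.sin (y 2))
      (Real.cos (x 2) • (ContinuousLinearMap.proj 2 : (Fin 4 → ℝ) →L[ℝ] ℝ)) x :=
    by have h := (Real.hasDerivAt_sin (x 2)).comp_hasFDerivAt x (hproj 2); exact h
  have e1 := (hat.mul hsF).fderiv
  have e2 := (hat.mul (hproj 1)).fderiv
  have e3 := ((hat.mul (hproj 1)).mul hsin).fderiv
  simp only [Pi.mul_def] at e1 e2 e3
  have ha0 : a (x 0) ≠ 0 := (hapos (x 0)).ne'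
  have hrne : x 1 ≠ 0 := hr.ne'
  have hsinne : Real.sin (x 2) ≠ 0 := (Real.sin_pos_of_pos_of_lt_pi hθ₁ hθ₂).ne'
  have hsq : Real.sqrt (1 - k * x 1 ^ 2) ^ 2 = 1 - k * x 1 ^ 2 := Real.sq_sqrt hk.le
  have T00 : Tor k a W₁ W₂ x 0 0 0 = 0 := by
    unfold Tor
    simp only [hco, Matrix.diagonal_apply, Fin.isValue, Fin.reduceEq, reduceIte, Fin.sum_univ_four]
    norm_num [pd, omegaTRW, div_eq_mul_inv, e1, e2, e3, Matrix.vecHead, Matrix.vecTail, Matrix.cons_val_zero, Matrix.cons_val_one, Matrix.cons_val_two, Matrix.cons_val_three, Pi.single_apply, Fin.ext_iff]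
    all_goals try field_simp
    all_goals try ring_nf
    all_goals try simp only [hsq]
    all_goals try ring_nf
  have T10 : Tor k a W₁ W₂ x 1 1 0 = -(deriv a (x 0) + W₁ (x 0) * a (x 0)) / Real.sqrt (1 - k * x 1 ^ 2) := by
    unfold Tor
    simp only [hco, Matrix.diagonal_apply, Fin.isValue, Fin.reduceEq, reduceIte, Fin.sum_univ_four]
    norm_num [pd, omegaTRW, div_eq_mul_inv, e1, e2, e3, Matrix.vecHead, Matrix.vecTail, Matrix.cons_val_zero, Matrix.cons_val_one, Matrix.cons_val_two, Matrix.cons_val_three, Pi.single_apply, Fin.ext_iff]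
    all_goals try field_simp
    all_goals try ring_nf
    all_goals try simp only [hsq]
    all_goals try ring_nf
  have T20 : Tor k a W₁ W₂ x 2 2 0 = -(deriv a (x 0) + W₁ (x 0) * a (x 0)) * x 1 := by
    unfold Tor
    simp only [hco, Matrix.diagonal_apply, Fin.isValue, Fin.reduceEq, reduceIte, Fin.sum_univ_four]
    norm_num [pd, omegaTRW, div_eq_mul_inv, e1, e2, e3, Matrix.vecHead, Matrix.vecTail, Matrix.cons_val_zero, Matrix.cons_val_one, Matrix.cons_val_two, Matrix.cons_val_three, Pi.single_apply, Fin.ext_iff]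
    all_goals try field_simp
    all_goals try ring_nf
    all_goals try simp only [hsq]
    all_goals try ring_nf
  have T30 : Tor k a W₁ W₂ x 3 3 0 = -(deriv a (x 0) + W₁ (x 0) * a (x 0)) * x 1 * Real.sin (x 2) := by
    unfold Tor
    simp only [hco, Matrix.diagonal_apply, Fin.isValue, Fin.reduceEq, reduceIte, Fin.sum_univ_four]
    norm_num [pd, omegaTRW, div_eq_mul_inv, e1, e2, e3, Matrix.vecHead, Matrix.vecTail, Matrix.cons_val_zero, Matrix.cons_val_one, Matrix.cons_val_two, Matrix.cons_val_three, Pi.single_apply, Fin.ext_iff]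
    all_goals try field_simp
    all_goals try ring_nf
    all_goals try simp only [hsq]
    all_goals try ring_nf
  have T01 : Tor k a W₁ W₂ x 0 0 1 = 0 := by
    unfold Tor
    simp only [hco, Matrix.diagonal_apply, Fin.isValue, Fin.reduceEq, reduceIte, Fin.sum_univ_four]
    norm_num [pd, omegaTRW, div_eq_mul_inv, e1, e2, e3, Matrix.vecHead, Matrix.vecTail, Matrix.cons_val_zero, Matrix.cons_val_one, Matrix.cons_val_two, Matrix.cons_val_three, Pi.single_apply, Fin.ext_iff]
    all_goals try field_simp
    all_goals try ring_nf
    all_goals try simp only [hsq]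
    all_goals try ring_nf
  have T11 : Tor k a W₁ W₂ x 1 1 1 = 0 := by
    unfold Tor
    simp only [hco, Matrix.diagonal_apply, Fin.isValue, Fin.reduceEq, reduceIte, Fin.sum_univ_four]
    norm_num [pd, omegaTRW, div_eq_mul_inv, e1, e2, e3, Matrix.vecHead, Matrix.vecTail, Matrix.cons_val_zero, Matrix.cons_val_one, Matrix.cons_val_two, Matrix.cons_val_three, Pi.single_apply, Fin.ext_iff]
    all_goals try field_simp
    all_goals try ring_nf
    all_goals try simp only [hsq]
    all_goals try ring_nf
  have T21 : Tor k a W₁ W₂ x 2 2 1 = 0 := by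
    unfold Tor
    simp only [hco, Matrix.diagonal_apply, Fin.isValue, Fin.reduceEq, reduceIte, Fin.sum_univ_four]
    norm_num [pd, omegaTRW, div_eq_mul_inv, e1, e2, e3, Matrix.vecHead, Matrix.vecTail, Matrix.cons_val_zero, Matrix.cons_val_one, Matrix.cons_val_two, Matrix.cons_val_three, Pi.single_apply, Fin.ext_iff]
    all_goals try field_simp
    all_goals try ring_nf
    all_goals try simp only [hsq]
    all_goals try ring_nf
  have T31 : Tor k a W₁ W₂ x 3 3 1 = 0 := by
    unfold Tor
    simp only [hco, Matrix.diagonal_apply, Fin.isValue, Fin.reduceEq, reduceIte, Fin.sum_univ_four]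
    norm_num [pd, omegaTRW, div_eq_mul_inv, e1, e2, e3, Matrix.vecHead, Matrix.vecTail, Matrix.cons_val_zero, Matrix.cons_val_one, Matrix.cons_val_two, Matrix.cons_val_three, Pi.single_apply, Fin.ext_iff]
    all_goals try field_simp
    all_goals try ring_nf
    all_goals try simp only [hsq]
    all_goals try ring_nf
  have T02 : Tor k a W₁ W₂ x 0 0 2 = 0 := by
    unfold Tor
    simp only [hco, Matrix.diagonal_apply, Fin.isValue, Fin.reduceEq, reduceIte, Fin.sum_univ_four]
    norm_num [pd, omegaTRW, div_eq_mul_inv, e1, e2, e3, Matrix.vecHead, Matrix.vecTail, Matrix.cons_val_zero, Matrix.cons_val_one, Matrix.cons_val_two, Matrix.cons_val_three, Pi.single_apply, Fin.ext_iff]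
    all_goals try field_simp
    all_goals try ring_nf
    all_goals try simp only [hsq]
    all_goals try ring_nf
  have T12 : Tor k a W₁ W₂ x 1 1 2 = 0 := by
    unfold Tor
    simp only [hco, Matrix.diagonal_apply, Fin.isValue, Fin.reduceEq, reduceIte, Fin.sum_univ_four]
    norm_num [pd, omegaTRW, div_eq_mul_inv, e1, e2, e3, Matrix.vecHead, Matrix.vecTail, Matrix.cons_val_zero, Matrix.cons_val_one, Matrix.cons_val_two, Matrix.cons_val_three, Pi.single_apply, Fin.ext_iff]
    all_goals try field_simp
    all_goals try ring_nf
    all_goals try simp only [hsq]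
    all_goals try ring_nf
  have T22 : Tor k a W₁ W₂ x 2 2 2 = 0 := by
    unfold Tor
    simp only [hco, Matrix.diagonal_apply, Fin.isValue, Fin.reduceEq, reduceIte, Fin.sum_univ_four]
    norm_num [pd, omegaTRW, div_eq_mul_inv, e1, e2, e3, Matrix.vecHead, Matrix.vecTail, Matrix.cons_val_zero, Matrix.cons_val_one, Matrix.cons_val_two, Matrix.cons_val_three, Pi.single_apply, Fin.ext_iff]
    all_goals try field_simp
    all_goals try ring_nf
    all_goals try simp only [hsq]
    all_goals try ring_nf
  have T32 : Tor k a W₁ W₂ x 3 3 2 = 0 := by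
    unfold Tor
    simp only [hco, Matrix.diagonal_apply, Fin.isValue, Fin.reduceEq, reduceIte, Fin.sum_univ_four]
    norm_num [pd, omegaTRW, div_eq_mul_inv, e1, e2, e3, Matrix.vecHead, Matrix.vecTail, Matrix.cons_val_zero, Matrix.cons_val_one, Matrix.cons_val_two, Matrix.cons_val_three, Pi.single_apply, Fin.ext_iff]
    all_goals try field_simp
    all_goals try ring_nf
    all_goals try simp only [hsq]
    all_goals try ring_nf
  have T03 : Tor k a W₁ W₂ x 0 0 3 = 0 := by
    unfold Tor
    simp only [hco, Matrix.diagonal_apply, Fin.isValue, Fin.reduceEq, reduceIte, Fin.sum_univ_four]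
    norm_num [pd, omegaTRW, div_eq_mul_inv, e1, e2, e3, Matrix.vecHead, Matrix.vecTail, Matrix.cons_val_zero, Matrix.cons_val_one, Matrix.cons_val_two, Matrix.cons_val_three, Pi.single_apply, Fin.ext_iff]
    all_goals try field_simp
    all_goals try ring_nf
    all_goals try simp only [hsq]
    all_goals try ring_nf
  have T13 : Tor k a W₁ W₂ x 1 1 3 = 0 := by
    unfold Tor
    simp only [hco, Matrix.diagonal_apply, Fin.isValue, Fin.reduceEq, reduceIte, Fin.sum_univ_four]
    norm_num [pd, omegaTRW, div_eq_mul_inv, e1, e2, e3, Matrix.vecHead, Matrix.vecTail, Matrix.cons_val_zero, Matrix.cons_val_one, Matrix.cons_val_two, Matrix.cons_val_three, Pi.single_apply, Fin.ext_iff]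
    all_goals try field_simp
    all_goals try ring_nf
    all_goals try simp only [hsq]
    all_goals try ring_nf
  have T23 : Tor k a W₁ W₂ x 2 2 3 = 0 := by
    unfold Tor
    simp only [hco, Matrix.diagonal_apply, Fin.isValue, Fin.reduceEq, reduceIte, Fin.sum_univ_four]
    norm_num [pd, omegaTRW, div_eq_mul_inv, e1, e2, e3, Matrix.vecHead, Matrix.vecTail, Matrix.cons_val_zero, Matrix.cons_val_one, Matrix.cons_val_two, Matrix.cons_val_three, Pi.single_apply, Fin.ext_iff]
    all_goals try field_simp
    all_goals try ring_nf
    all_goals try simp only [hsq]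
    all_goals try ring_nf
  have T33 : Tor k a W₁ W₂ x 3 3 3 = 0 := by
    unfold Tor
    simp only [hco, Matrix.diagonal_apply, Fin.isValue, Fin.reduceEq, reduceIte, Fin.sum_univ_four]
    norm_num [pd, omegaTRW, div_eq_mul_inv, e1, e2, e3, Matrix.vecHead, Matrix.vecTail, Matrix.cons_val_zero, Matrix.cons_val_one, Matrix.cons_val_two, Matrix.cons_val_three, Pi.single_apply, Fin.ext_iff]
    all_goals try field_simp
    all_goals try ring_nf
    all_goals try simp only [hsq]
    all_goals try ring_nf
  refine ⟨?_, ?_, ?_, ?_⟩ <;>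
  · simp only [Vfr, Tfr, Fin.sum_univ_four]
    simp only [hin, Matrix.diagonal_apply, Fin.isValue, Fin.reduceEq, reduceIte,
      mul_zero, zero_mul, mul_one, one_mul, add_zero, zero_add, Matrix.vecHead, Matrix.vecTail,
      Matrix.cons_val_zero, Matrix.cons_val_one, Matrix.cons_val_two, Matrix.cons_val_three,
      Function.comp_apply, Matrix.cons_val_succ,
      T00, T10, T20, T30, T01, T11, T21, T31,
      T02, T12, T22, T32, T03, T13, T23, T33]
    all_goals try field_simp
    all_goals try ring_nf
    all_goals try simp only [hsq]
    all_goals try ring_nf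

end
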